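/- Let (E, L) be a left-resolving labelled graph and let B be an accommodating collection of subsets of E^0. Then B̃, the collection of finite disjoint unions of sets of the form A \ B with A ∈ B, B ∈ B ∪ {∅}, B ⊆ A, is again accommodating for (E, L): it is closed under relative ranges, contains r(α) for all labelled paths α, and is closed under finite intersections and unions. -/

import Mathlib

/-- A labelled graph: a directed graph with source, range maps and a labelling of edges. -/
structure LabelledGraph (V E A : Type*) where
  src : E → V
  rng : E → V
  lab : E → A

namespace LabelledGraph

variable {V E A : Type*}

/-- `es` is a (nonempty, composable) path of edges. -/
def IsPath (G : LabelledGraph V E A) (es : List E) : Prop :=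
  es ≠ [] ∧ es.Chain' (fun e f => G.rng e = G.src f)

/-- The relative range `r(S, α)`: ranges of paths labelled `α` whose source lies in `S`. -/
def relRange (G : LabelledGraph V E A) (S : Set V) (α : List A) : Set V :=
  { w | ∃ es : List E, G.IsPath es ∧ es.map G.lab = α ∧
        (∀ e ∈ es.head?, G.src e ∈ S) ∧ ∃ e ∈ es.getLast?, G.rng e = w }

/-- `α` is a labelled path if it is the label of some path in the graph. -/
def IsLabelledPath (G : LabelledGraph V E A) (α : List A) : Prop :=
  (G.relRange Set.univ α).Nonempty

/-- The graph is left-resolving: the labelling is injective on edges into each vertex. -/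
def LeftResolving (G : LabelledGraph V E A) : Prop :=
  ∀ e f : E, G.rng e = G.rng f → G.lab e = G.lab f → e = f

/-- `L(S E¹)`, the set of labels of edges emitted from `S`. -/
def labelsFrom (G : LabelledGraph V E A) (S : Set V) : Set A :=
  G.lab '' (G.src ⁻¹' S)

/-- A sink: a vertex emitting no edges. -/
def IsSink (G : LabelledGraph V E A) (v : V) : Prop := ∀ e : E, G.src e ≠ v

/-- `𝓑` is accommodating for `G`. -/
def Accommodating (G : LabelledGraph V E A) (𝓑 : Set (Set V)) : Prop :=
  (∀ S ∈ 𝓑, ∀ α : List A, G.IsLabelledPath α → G.relRange S α ∈ 𝓑) ∧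
  (∀ α : List A, G.IsLabelledPath α → G.relRange Set.univ α ∈ 𝓑) ∧
  (∀ S ∈ 𝓑, ∀ T ∈ 𝓑, S ∩ T ∈ 𝓑) ∧
  (∀ S ∈ 𝓑, ∀ T ∈ 𝓑, S ∪ T ∈ 𝓑)

/-- The labelled space `(E, L, 𝓑)` is weakly left-resolving. -/
def WeaklyLeftResolving (G : LabelledGraph V E A) (𝓑 : Set (Set V)) : Prop :=
  ∀ S ∈ 𝓑, ∀ T ∈ 𝓑, ∀ α : List A, G.IsLabelledPath α →
    G.relRange (S ∩ T) α = G.relRange S α ∩ G.relRange T α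

/-- The labelled space `(E, L, 𝓑)` is regular. -/
def Regular (G : LabelledGraph V E A) (𝓑 : Set (Set V)) : Prop :=
  ∀ S ∈ 𝓑, ∀ T ∈ 𝓑,
    G.labelsFrom S = G.labelsFrom T → (G.labelsFrom S).Finite →
    (∀ v ∈ S, ¬ G.IsSink v) → (∀ v ∈ T, ¬ G.IsSink v) →
    (∀ a ∈ G.labelsFrom S, G.relRange S [a] = G.relRange T [a]) →
    S = T

end LabelledGraph

/-- `𝓑^`: the collection of relative complements `S \ T` with `T ∈ 𝓑 ∪ {∅}`, `T ⊆ S`. -/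
def hatSet {V : Type*} (𝓑 : Set (Set V)) : Set (Set V) :=
  { D | ∃ S ∈ 𝓑, ∃ T : Set V, (T ∈ 𝓑 ∨ T = ∅) ∧ T ⊆ S ∧ D = S \ T }

/-- `𝓑~`: the collection of finite disjoint unions of members of `𝓑^`. -/
def tildeSet {V : Type*} (𝓑 : Set (Set V)) : Set (Set V) :=
  { D | ∃ F : Finset (Set V), (↑F : Set (Set V)) ⊆ hatSet 𝓑 ∧
        (↑F : Set (Set V)).Pairwise Disjoint ∧ D = ⋃₀ ↑F }

namespace LabelledGraph
variable {V E A : Type*}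

theorem path_unique (G : LabelledGraph V E A) (hG : G.LeftResolving) :
    ∀ es fs : List E, es.Chain' (fun e f => G.rng e = G.src f) →
      fs.Chain' (fun e f => G.rng e = G.src f) →
      es.map G.lab = fs.map G.lab →
      es.getLast?.map G.rng = fs.getLast?.map G.rng → es = fs := by
  intro es
  induction es using List.reverseRecOn with
  | nil =>
    intro fs _ _ hmap _
    simpa using (List.map_eq_nil_iff.mp hmap.symm).symm
  | append_singleton es' e ih =>
    intro fs hc1 hc2 hmap hlast
    rcases eq_or_ne fs [] with rfl | hfs
    · simp at hmap
    · obtain ⟨fs', f, rfl⟩ := (fs.eq_nil_or_concat.resolve_left hfs)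
      have hmap2 : es'.map G.lab ++ [G.lab e] = fs'.map G.lab ++ [G.lab f] := by
        simpa using hmap
      have hlab : G.lab e = G.lab f := by
        have := (List.append_inj' hmap2 rfl).2
        simpa using this
      have hmap' : es'.map G.lab = fs'.map G.lab := (List.append_inj' hmap2 rfl).1
      simp only [List.getLast?_append_cons, List.getLast?_singleton] at hlast
      have hrng : G.rng e = G.rng f := by simpa using hlast
      have hef : e = f := hG e f hrng hlab
      subst hef
      rcases List.isChain_append.mp hc1 with ⟨hc1', _, h1⟩
      rw [List.concat_eq_append] at hc2
      rcases List.isChain_append.mp hc2 with ⟨hc2', _, h2⟩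
      rw [List.concat_eq_append]
      congr 1
      apply ih fs' hc1' hc2' hmap'
      rcases eq_or_ne es' [] with rfl | hes'
      · have : fs' = [] := by simpa using List.map_eq_nil_iff.mp hmap'.symm
        simp [this]
      · have hfs' : fs' ≠ [] := by
          intro h; subst h; simp at hmap'; exact hes' hmap'
        obtain ⟨y, hy⟩ : ∃ y, fs'.getLast? = some y := ⟨fs'.getLast hfs', List.getLast?_eq_getLast hfs'⟩
        obtain ⟨x, hx⟩ : ∃ x, es'.getLast? = some x := ⟨es'.getLast hes', List.getLast?_eq_getLast hes'⟩
        have hx1 : G.rng x = G.src e := h1 x (by simp [hx]) e (by simp)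
        have hy1 : G.rng y = G.src e := h2 y (by simp [hy]) e (by simp)
        simp [hx, hy, hx1, hy1]

theorem relRange_mono (G : LabelledGraph V E A) {S T : Set V} (h : S ⊆ T) (α : List A) :
    G.relRange S α ⊆ G.relRange T α := by
  rintro w ⟨es, hp, hm, hs, hl⟩
  exact ⟨es, hp, hm, fun e he => h (hs e he), hl⟩

theorem relRange_empty (G : LabelledGraph V E A) (α : List A) :
    G.relRange (∅ : Set V) α = ∅ := by
  ext w
  simp only [Set.mem_empty_iff_false, iff_false]
  rintro ⟨es, ⟨hne, _⟩, hm, hs, hl⟩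
  cases es with
  | nil => exact hne rfl
  | cons e es' => exact hs e rfl

theorem relRange_inter (G : LabelledGraph V E A) (hG : G.LeftResolving) (S T : Set V)
    (α : List A) : G.relRange (S ∩ T) α = G.relRange S α ∩ G.relRange T α := by
  apply Set.Subset.antisymm
  · exact Set.subset_inter (G.relRange_mono Set.inter_subset_left α)
      (G.relRange_mono Set.inter_subset_right α)
  · rintro w ⟨⟨es, ⟨hne1, hc1⟩, hm1, hs1, e, he, hee⟩, ⟨fs, ⟨hne2, hc2⟩, hm2, hs2, f, hf, hff⟩⟩
    have : es = fs := by
      apply G.path_unique hG es fs hc1 hc2 (hm1.trans hm2.symm)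
      rw [he, hf]
      simp [hee, hff]
    subst this
    exact ⟨es, ⟨hne1, hc1⟩, hm1, fun x hx => ⟨hs1 x hx, hs2 x hx⟩, e, he, hee⟩

theorem relRange_diff (G : LabelledGraph V E A) (hG : G.LeftResolving) (S T : Set V)
    (α : List A) : G.relRange (S \ T) α = G.relRange S α \ G.relRange T α := by
  apply Set.Subset.antisymm
  · intro w hw
    refine ⟨G.relRange_mono Set.diff_subset α hw, fun hwT => ?_⟩
    have : w ∈ G.relRange ((S \ T) ∩ T) α := by
      rw [G.relRange_inter hG]; exact ⟨hw, hwT⟩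
    rw [Set.diff_inter_self, G.relRange_empty] at this
    exact this
  · rintro w ⟨⟨es, hp, hm, hs, hl⟩, hwT⟩
    refine ⟨es, hp, hm, fun e he => ⟨hs e he, fun heT => ?_⟩, hl⟩
    refine hwT ⟨es, hp, hm, fun f hf => ?_, hl⟩
    rw [Option.mem_def] at he hf
    rw [he] at hf
    exact (Option.some_inj.mp hf) ▸ heT

theorem relRange_sUnion (G : LabelledGraph V E A) (C : Set (Set V)) (α : List A) :
    G.relRange (⋃₀ C) α = ⋃ S ∈ C, G.relRange S α := by
  apply Set.Subset.antisymm
  · rintro w ⟨es, hp, hm, hs, hl⟩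
    cases es with
    | nil => exact absurd rfl hp.1
    | cons e es' =>
      obtain ⟨S, hSC, hSe⟩ := hs e rfl
      exact Set.mem_biUnion hSC ⟨e :: es', hp, hm,
        fun f hf => by
          have h2 : e = f := by simpa using hf
          exact h2 ▸ hSe, hl⟩
  · intro w hw
    obtain ⟨S, hSC, hwS⟩ := Set.mem_iUnion₂.mp hw
    exact G.relRange_mono (fun x hx => Set.mem_sUnion.mpr ⟨S, hSC, hx⟩) α hwS

end LabelledGraph

section TildeAlgebra
variable {V : Type*}
variable {𝓑 : Set (Set V)}
variable (hi : ∀ S ∈ 𝓑, ∀ T ∈ 𝓑, S ∩ T ∈ 𝓑) (hu : ∀ S ∈ 𝓑, ∀ T ∈ 𝓑, S ∪ T ∈ 𝓑)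

theorem mem_hat_of_B {S : Set V} (hS : S ∈ 𝓑) : S ∈ hatSet 𝓑 :=
  ⟨S, hS, ∅, Or.inr rfl, Set.empty_subset S, by simp⟩

theorem mem_tilde_of_hat {D : Set V} (hD : D ∈ hatSet 𝓑) : D ∈ tildeSet 𝓑 :=
  ⟨{D}, by simpa using hD, by simp, by simp⟩

theorem empty_mem_tilde : (∅ : Set V) ∈ tildeSet 𝓑 :=
  ⟨∅, by simp, by simp, by simp⟩

include hi hu in
theorem hat_inter {D D' : Set V} (hD : D ∈ hatSet 𝓑) (hD' : D' ∈ hatSet 𝓑) :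
    D ∩ D' ∈ hatSet 𝓑 := by
  obtain ⟨S, hS, T, hT, hTS, rfl⟩ := hD
  obtain ⟨S', hS', T', hT', hTS', rfl⟩ := hD'
  refine ⟨S ∩ S', hi S hS S' hS', (T ∪ T') ∩ (S ∩ S'), ?_, Set.inter_subset_right, ?_⟩
  · rcases hT with hT | rfl <;> rcases hT' with hT' | rfl
    · exact Or.inl (hi _ (hu T hT T' hT') _ (hi S hS S' hS'))
    · exact Or.inl (by simpa using hi T hT _ (hi S hS S' hS'))
    · exact Or.inl (by simpa using hi T' hT' _ (hi S hS S' hS'))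
    · exact Or.inr (by simp)
  · ext x
    simp only [Set.mem_inter_iff, Set.mem_diff, Set.mem_union]
    tauto

theorem tilde_disjoint_union [DecidableEq (Set V)] {X Y : Set V} (hX : X ∈ tildeSet 𝓑) (hY : Y ∈ tildeSet 𝓑)
    (hXY : Disjoint X Y) : X ∪ Y ∈ tildeSet 𝓑 := by
  obtain ⟨F, hF, hpF, rfl⟩ := hX
  obtain ⟨G, hG, hpG, rfl⟩ := hY
  refine ⟨F ∪ G, ?_, ?_, ?_⟩
  · rw [Finset.coe_union]; exact Set.union_subset hF hG
  · rw [Finset.coe_union]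
    intro a ha b hb hab
    rcases ha with ha | ha <;> rcases hb with hb | hb
    · exact hpF ha hb hab
    · exact hXY.mono (Set.subset_sUnion_of_mem ha) (Set.subset_sUnion_of_mem hb)
    · exact (hXY.mono (Set.subset_sUnion_of_mem hb) (Set.subset_sUnion_of_mem ha)).symm
    · exact hpG ha hb hab
  · rw [Finset.coe_union, Set.sUnion_union]

include hi hu in
theorem hat_diff_tilde {D D' : Set V} (hD : D ∈ hatSet 𝓑) (hD' : D' ∈ hatSet 𝓑) :
    D \ D' ∈ tildeSet 𝓑 := by
  classical
  obtain ⟨S, hS, T, hT, hTS, rfl⟩ := hD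
  obtain ⟨S', hS', T', hT', hTS', rfl⟩ := hD'
  have hQ : S \ ((T ∪ S') ∩ S) ∈ hatSet 𝓑 := by
    refine ⟨S, hS, (T ∪ S') ∩ S, Or.inl ?_, Set.inter_subset_right, rfl⟩
    rcases hT with hT | rfl
    · exact hi _ (hu T hT S' hS') S hS
    · simpa using hi S' hS' S hS
  rcases hT' with hT' | rfl
  · -- P ∪ Q
    have hP : (S ∩ T') \ (T ∩ (S ∩ T')) ∈ hatSet 𝓑 := by
      refine ⟨S ∩ T', hi S hS T' hT', T ∩ (S ∩ T'), ?_, Set.inter_subset_right, rfl⟩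
      rcases hT with hT | rfl
      · exact Or.inl (hi T hT _ (hi S hS T' hT'))
      · exact Or.inr (by simp)
    have key : (S \ T) \ (S' \ T') =
        ((S ∩ T') \ (T ∩ (S ∩ T'))) ∪ (S \ ((T ∪ S') ∩ S)) := by
      ext x
      simp only [Set.mem_diff, Set.mem_inter_iff, Set.mem_union]
      constructor
      · rintro ⟨⟨hxS, hxT⟩, h⟩
        by_cases hxS' : x ∈ S'
        · have hxT' : x ∈ T' := by tauto
          exact Or.inl ⟨⟨hxS, hxT'⟩, fun h2 => hxT h2.1⟩
        · exact Or.inr ⟨hxS, fun h2 => by tauto⟩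
      · rintro (⟨⟨hxS, hxT'⟩, h⟩ | ⟨hxS, h⟩)
        · exact ⟨⟨hxS, fun hxT => h ⟨hxT, hxS, hxT'⟩⟩, fun h2 => h2.2 hxT'⟩
        · exact ⟨⟨hxS, fun hxT => h ⟨Or.inl hxT, hxS⟩⟩,
            fun h2 => h ⟨Or.inr h2.1, hxS⟩⟩
    rw [key]
    refine tilde_disjoint_union (mem_tilde_of_hat hP) (mem_tilde_of_hat hQ) ?_
    rw [Set.disjoint_left]
    rintro x ⟨⟨hxS, hxT'⟩, -⟩ ⟨-, h⟩
    exact h ⟨Or.inr (hTS' hxT'), hxS⟩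
  · have key : (S \ T) \ (S' \ ∅) = S \ ((T ∪ S') ∩ S) := by
      ext x
      simp only [Set.mem_diff, Set.mem_inter_iff, Set.mem_union, Set.mem_empty_iff_false]
      tauto
    rw [key]
    exact mem_tilde_of_hat hQ

include hi hu in
theorem tilde_inter {X Y : Set V} (hX : X ∈ tildeSet 𝓑) (hY : Y ∈ tildeSet 𝓑) :
    X ∩ Y ∈ tildeSet 𝓑 := by
  classical
  obtain ⟨F, hF, hpF, rfl⟩ := hX
  obtain ⟨G, hG, hpG, rfl⟩ := hY
  refine ⟨(F ×ˢ G).image (fun p => p.1 ∩ p.2), ?_, ?_, ?_⟩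
  · intro a ha
    simp only [Finset.coe_image, Set.mem_image, Finset.mem_coe, Finset.mem_product] at ha
    obtain ⟨p, ⟨hp1, hp2⟩, rfl⟩ := ha
    exact hat_inter hi hu (hF hp1) (hG hp2)
  · intro a ha b hb hab
    simp only [Finset.coe_image, Set.mem_image, Finset.mem_coe, Finset.mem_product] at ha hb
    obtain ⟨p, ⟨hp1, hp2⟩, rfl⟩ := ha
    obtain ⟨q, ⟨hq1, hq2⟩, rfl⟩ := hb
    by_cases h1 : p.1 = q.1
    · have h2 : p.2 ≠ q.2 := fun h2 => hab (by rw [h1, h2])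
      exact ((hpG hp2 hq2 h2).mono Set.inter_subset_right Set.inter_subset_right)
    · exact ((hpF hp1 hq1 h1).mono Set.inter_subset_left Set.inter_subset_left)
  · ext x
    simp only [Set.mem_inter_iff, Set.mem_sUnion, Finset.coe_image, Set.mem_image,
      Finset.mem_coe, Finset.mem_product]
    constructor
    · rintro ⟨⟨a, haF, hxa⟩, ⟨b, hbG, hxb⟩⟩
      exact ⟨a ∩ b, ⟨(a, b), ⟨haF, hbG⟩, rfl⟩, hxa, hxb⟩
    · rintro ⟨c, ⟨p, ⟨hp1, hp2⟩, rfl⟩, hx1, hx2⟩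
      exact ⟨⟨p.1, hp1, hx1⟩, ⟨p.2, hp2, hx2⟩⟩

include hi hu in
theorem hat_diff_sUnion [DecidableEq (Set V)] {D : Set V} (hD : D ∈ hatSet 𝓑) (G : Finset (Set V))
    (hG : (↑G : Set (Set V)) ⊆ hatSet 𝓑) : D \ ⋃₀ ↑G ∈ tildeSet 𝓑 := by
  induction G using Finset.induction_on with
  | empty => simpa using mem_tilde_of_hat hD
  | @insert a G ha IH =>
    rw [Finset.coe_insert] at hG ⊢
    rw [Set.sUnion_insert]
    have key : D \ (a ∪ ⋃₀ ↑G) = (D \ a) ∩ (D \ ⋃₀ ↑G) := by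
      ext x; simp only [Set.mem_diff, Set.mem_inter_iff, Set.mem_union]; tauto
    rw [key]
    exact tilde_inter hi hu (hat_diff_tilde hi hu hD (hG (Set.mem_insert a _)))
      (IH (fun b hb => hG (Set.mem_insert_of_mem a hb)))

include hi hu in
theorem tilde_diff [DecidableEq (Set V)] {X Y : Set V} (hX : X ∈ tildeSet 𝓑)
    (hY : Y ∈ tildeSet 𝓑) : X \ Y ∈ tildeSet 𝓑 := by
  obtain ⟨F, hF, hpF, rfl⟩ := hX
  induction F using Finset.induction_on with
  | empty => simpa using empty_mem_tilde
  | @insert a F ha IH =>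
    rw [Finset.coe_insert] at hF hpF ⊢
    rw [Set.sUnion_insert]
    have key : (a ∪ ⋃₀ ↑F) \ Y = (a \ Y) ∪ ((⋃₀ ↑F) \ Y) := by
      ext x; simp only [Set.mem_diff, Set.mem_union, Set.mem_sUnion]; tauto
    rw [key]
    obtain ⟨GY, hGY, hpGY, rfl⟩ := hY
    have h1 : a \ ⋃₀ ↑GY ∈ tildeSet 𝓑 :=
      hat_diff_sUnion hi hu (hF (Set.mem_insert a _)) GY hGY
    have h2 : (⋃₀ ↑F) \ ⋃₀ ↑GY ∈ tildeSet 𝓑 :=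
      IH (fun b hb => hF (Set.mem_insert_of_mem a hb))
        (hpF.mono (Set.subset_insert a _))
    refine tilde_disjoint_union h1 h2 ?_
    have hd : Disjoint a (⋃₀ ↑F) := by
      rw [Set.disjoint_sUnion_right]
      intro b hb
      exact hpF (Set.mem_insert a _) (Set.mem_insert_of_mem a hb)
        (fun h => ha (h ▸ hb))
    exact hd.mono Set.diff_subset Set.diff_subset

include hi hu in
theorem tilde_union [DecidableEq (Set V)] {X Y : Set V} (hX : X ∈ tildeSet 𝓑)
    (hY : Y ∈ tildeSet 𝓑) : X ∪ Y ∈ tildeSet 𝓑 := by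
  have : X ∪ Y = X ∪ (Y \ X) := by rw [Set.union_diff_self]
  rw [this]
  exact tilde_disjoint_union hX (tilde_diff hi hu hY hX) Set.disjoint_sdiff_right

end TildeAlgebra

theorem stmt5 {V E A : Type*} (G : LabelledGraph V E A) (hG : G.LeftResolving)
    (𝓑 : Set (Set V)) (hacc : G.Accommodating 𝓑) :
    G.Accommodating (tildeSet 𝓑) := by
  classical
  obtain ⟨hB1, hB2, hB3, hB4⟩ := hacc
  refine ⟨?_, ?_, ?_, ?_⟩
  · rintro S ⟨F, hF, hpF, rfl⟩ α hα
    refine ⟨F.image (fun D => G.relRange D α), ?_, ?_, ?_⟩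
    · intro X hX
      simp only [Finset.coe_image, Set.mem_image, Finset.mem_coe] at hX
      obtain ⟨D, hDF, rfl⟩ := hX
      obtain ⟨S₁, hS₁, T₁, hT₁, hT₁S₁, rfl⟩ := hF hDF
      refine ⟨G.relRange S₁ α, hB1 S₁ hS₁ α hα, G.relRange T₁ α, ?_,
        G.relRange_mono hT₁S₁ α, (G.relRange_diff hG S₁ T₁ α).symm ▸ rfl⟩
      rcases hT₁ with hT₁ | rfl
      · exact Or.inl (hB1 T₁ hT₁ α hα)
      · exact Or.inr (G.relRange_empty α)
    · intro X hX Y hY hXY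
      simp only [Finset.coe_image, Set.mem_image, Finset.mem_coe] at hX hY
      obtain ⟨D, hDF, rfl⟩ := hX
      obtain ⟨D', hD'F, rfl⟩ := hY
      have hDD' : D ≠ D' := fun h => hXY (by rw [h])
      have hdisj : Disjoint D D' := hpF hDF hD'F hDD'
      refine Set.disjoint_iff_inter_eq_empty.mpr ?_
      rw [← G.relRange_inter hG, Set.disjoint_iff_inter_eq_empty.mp hdisj,
        G.relRange_empty]
    · rw [G.relRange_sUnion, Finset.coe_image, Set.sUnion_image]
  · intro α hα
    exact mem_tilde_of_hat (mem_hat_of_B (hB2 α hα))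
  · intro S hS T hT
    exact tilde_inter hB3 hB4 hS hT
  · intro S hS T hT
    exact tilde_union hB3 hB4 hS hT
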